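/- Let μ be a σ-finite Borel measure on the unit circle and suppose the ideal I = {P ∈ ℂ[z] : ∫|P|² dμ < ∞} is nonzero. Then I is generated by a single monic polynomial P_μ all of whose roots lie on the unit circle. -/

import Mathlib

open MeasureTheory Polynomial
open scoped NNReal ENNReal

private lemma sq_add_le (a b : ℝ≥0) :
    ((a + b : ℝ≥0) : ℝ≥0∞)^2 ≤ 2 * ((a : ℝ≥0∞)^2 + (b : ℝ≥0∞)^2) := by
  have h : (a + b)^2 ≤ 2 * (a^2 + b^2) := by
    rw [← NNReal.coe_le_coe]; push_cast; nlinarith [sq_nonneg ((a : ℝ) - b)]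
  calc ((a + b : ℝ≥0) : ℝ≥0∞)^2 = (((a + b)^2 : ℝ≥0) : ℝ≥0∞) := by push_cast; ring
    _ ≤ ((2 * (a^2 + b^2) : ℝ≥0) : ℝ≥0∞) := by exact_mod_cast h
    _ = 2 * ((a : ℝ≥0∞)^2 + (b : ℝ≥0∞)^2) := by push_cast; ring

private lemma dom_lemma (μ : Measure ℂ) (f g : ℂ → ℂ) (C : ℝ≥0)
    (h : ∀ᵐ z ∂μ, ‖f z‖ ≤ C * ‖g z‖)
    (hg : ∫⁻ z, (‖g z‖₊ : ℝ≥0∞)^2 ∂μ < ⊤) :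
    ∫⁻ z, (‖f z‖₊ : ℝ≥0∞)^2 ∂μ < ⊤ := by
  have hle : ∫⁻ z, (‖f z‖₊ : ℝ≥0∞)^2 ∂μ
      ≤ ∫⁻ z, (C : ℝ≥0∞)^2 * (‖g z‖₊ : ℝ≥0∞)^2 ∂μ := by
    refine lintegral_mono_ae (h.mono fun z hz => ?_)
    have hz' : ‖f z‖₊ ≤ C * ‖g z‖₊ := by
      rw [← NNReal.coe_le_coe]; push_cast; simpa using hz
    calc (‖f z‖₊ : ℝ≥0∞)^2 ≤ ((C * ‖g z‖₊ : ℝ≥0) : ℝ≥0∞)^2 := by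
          exact_mod_cast pow_le_pow_left' hz' 2
      _ = (C : ℝ≥0∞)^2 * (‖g z‖₊ : ℝ≥0∞)^2 := by push_cast; ring
  refine lt_of_le_of_lt hle ?_
  rw [lintegral_const_mul' _ _ (ENNReal.pow_ne_top ENNReal.coe_ne_top)]
  exact ENNReal.mul_lt_top (ENNReal.pow_ne_top ENNReal.coe_ne_top).lt_top hg

private lemma poly_bound (Q : Polynomial ℂ) :
    ∃ C : ℝ≥0, ∀ z : ℂ, ‖z‖ = 1 → ‖Q.eval z‖ ≤ C := by
  obtain ⟨C, hC⟩ := (isCompact_sphere (0 : ℂ) 1).exists_bound_of_continuousOn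
    (Q.continuous.continuousOn)
  refine ⟨C.toNNReal, fun z hz => ?_⟩
  have hz' : z ∈ Metric.sphere (0 : ℂ) 1 := by
    simp only [mem_sphere_zero_iff_norm] at hz ⊢; exact hz
  exact le_trans (hC z hz') (Real.le_coe_toNNReal C)

private lemma poly_meas (P : Polynomial ℂ) :
    Measurable fun z : ℂ => (‖P.eval z‖₊ : ℝ≥0∞)^2 :=
  (P.continuous.measurable.nnnorm.coe_nnreal_ennreal.pow_const 2)

theorem square_integrable_polynomials_principal (μ : Measure ℂ) [SigmaFinite μ]
    (hsupp : μ {z : ℂ | ‖z‖ ≠ 1} = 0)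
    (hne : ∃ P : Polynomial ℂ, P ≠ 0 ∧ (∫⁻ z, (‖P.eval z‖₊ : ENNReal)^2 ∂μ) < ⊤) :
    ∃ Pμ : Polynomial ℂ, Pμ.Monic ∧ (∀ z : ℂ, Pμ.IsRoot z → ‖z‖ = 1) ∧
      ∀ P : Polynomial ℂ,
        ((∫⁻ z, (‖P.eval z‖₊ : ENNReal)^2 ∂μ) < ⊤ ↔ Pμ ∣ P) := by
  have hae : ∀ᵐ z ∂μ, ‖z‖ = 1 := by
    rw [ae_iff]; simpa using hsupp
  set I : Ideal (Polynomial ℂ) :=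
    { carrier := {P | ∫⁻ z, (‖P.eval z‖₊ : ℝ≥0∞)^2 ∂μ < ⊤}
      zero_mem' := by simp
      add_mem' := by
        intro P Q hP hQ
        simp only [Set.mem_setOf_eq] at hP hQ ⊢
        have hle : ∫⁻ z, (‖(P + Q).eval z‖₊ : ℝ≥0∞)^2 ∂μ
            ≤ ∫⁻ z, 2 * ((‖P.eval z‖₊ : ℝ≥0∞)^2 + (‖Q.eval z‖₊ : ℝ≥0∞)^2) ∂μ := by
          refine lintegral_mono fun z => ?_
          have h1 : ‖(P + Q).eval z‖₊ ≤ ‖P.eval z‖₊ + ‖Q.eval z‖₊ := by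
            simpa using nnnorm_add_le (P.eval z) (Q.eval z)
          calc (‖(P + Q).eval z‖₊ : ℝ≥0∞)^2
              ≤ ((‖P.eval z‖₊ + ‖Q.eval z‖₊ : ℝ≥0) : ℝ≥0∞)^2 := by
                exact_mod_cast pow_le_pow_left' h1 2
            _ ≤ 2 * ((‖P.eval z‖₊ : ℝ≥0∞)^2 + (‖Q.eval z‖₊ : ℝ≥0∞)^2) := sq_add_le _ _
        refine lt_of_le_of_lt hle ?_
        rw [lintegral_const_mul' _ _ (by simp), lintegral_add_left (poly_meas P)]
        exact ENNReal.mul_lt_top (by simp) (ENNReal.add_lt_top.mpr ⟨hP, hQ⟩)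
      smul_mem' := by
        intro Q P hP
        simp only [smul_eq_mul, Set.mem_setOf_eq] at hP ⊢
        obtain ⟨C, hC⟩ := poly_bound Q
        refine dom_lemma μ _ _ C (hae.mono fun z hz => ?_) hP
        rw [eval_mul, norm_mul]
        exact mul_le_mul_of_nonneg_right (hC z hz) (norm_nonneg _) }
  have hmem : ∀ P : Polynomial ℂ, P ∈ I ↔ ∫⁻ z, (‖P.eval z‖₊ : ℝ≥0∞)^2 ∂μ < ⊤ :=
    fun P => Iff.rfl
  obtain ⟨g, hg⟩ : I.IsPrincipal := IsPrincipalIdealRing.principal I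
  have hgen : ∀ P : Polynomial ℂ, P ∈ I ↔ g ∣ P := by
    intro P; rw [hg]; exact Ideal.mem_span_singleton
  obtain ⟨P0, hP0ne, hP0⟩ := hne
  have hgne : g ≠ 0 := by
    intro h0
    have hdvd : g ∣ P0 := (hgen P0).mp ((hmem P0).mpr hP0)
    rw [h0, zero_dvd_iff] at hdvd
    exact hP0ne hdvd
  set Pμ : Polynomial ℂ := g * Polynomial.C g.leadingCoeff⁻¹ with hPμ
  have hmonic : Pμ.Monic := monic_mul_leadingCoeff_inv hgne
  have hPμne : Pμ ≠ 0 := hmonic.ne_zero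
  have hdvd_iff : ∀ P : Polynomial ℂ, Pμ ∣ P ↔ g ∣ P := by
    intro P
    constructor
    · intro h; exact dvd_trans ⟨Polynomial.C g.leadingCoeff⁻¹, rfl⟩ h
    · intro h
      refine dvd_trans ?_ h
      refine ⟨Polynomial.C g.leadingCoeff, ?_⟩
      rw [hPμ, mul_assoc, ← Polynomial.C_mul, inv_mul_cancel₀ (leadingCoeff_ne_zero.mpr hgne),
        Polynomial.C_1, mul_one]
  have hmemPμ : ∀ P : Polynomial ℂ, P ∈ I ↔ Pμ ∣ P := fun P => (hgen P).trans (hdvd_iff P).symm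
  refine ⟨Pμ, hmonic, ?_, fun P => hmemPμ P⟩
  -- roots on circle
  intro z₀ hz₀
  by_contra habs
  obtain ⟨Q, hQ⟩ := (dvd_iff_isRoot.mpr hz₀ : X - Polynomial.C z₀ ∣ Pμ)
  have hQne : Q ≠ 0 := by rintro rfl; simp at hQ; exact hPμne hQ
  have hPμI : Pμ ∈ I := (hmemPμ Pμ).mpr dvd_rfl
  -- lower bound on |z - z₀| on the circle
  set r : ℝ := |1 - ‖z₀‖| with hr
  have hrpos : 0 < r := by
    rw [hr, abs_pos]; intro h; apply habs; linarith
  have hQI : Q ∈ I := by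
    rw [hmem]
    refine dom_lemma μ _ _ ⟨r⁻¹, by positivity⟩ (hae.mono fun z hz => ?_) hPμI
    have hlow : r ≤ ‖z - z₀‖ := by
      calc r = |‖z‖ - ‖z₀‖| := by
            rw [hr, hz]
      _ ≤ ‖z - z₀‖ := abs_norm_sub_norm_le z z₀
    have heval : ‖Pμ.eval z‖ = ‖z - z₀‖ * ‖Q.eval z‖ := by
      rw [hQ, eval_mul, norm_mul]; simp
    show ‖Q.eval z‖ ≤ r⁻¹ * ‖Pμ.eval z‖
    have h1 : r * ‖Q.eval z‖ ≤ ‖Pμ.eval z‖ := by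
      rw [heval]; exact mul_le_mul_of_nonneg_right hlow (norm_nonneg _)
    have h2 := mul_le_mul_of_nonneg_left h1 (inv_nonneg.2 hrpos.le)
    rwa [← mul_assoc, inv_mul_cancel₀ hrpos.ne', one_mul] at h2
  have hle := Polynomial.natDegree_le_of_dvd ((hmemPμ Q).mp hQI) hQne
  have hdeg : Pμ.natDegree = 1 + Q.natDegree := by
    rw [hQ, natDegree_mul (X_sub_C_ne_zero z₀) hQne, natDegree_X_sub_C]
  omega
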